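/- For the composed transformation D ↦ T_z T^s R(D) (rotate by R, scale by s, shift by z), the CGPT block matrix of order K satisfies M(T_z T^s R(D)) = s · conj(G(z)) conj(Q(s,R)) M(D) Q(s,R)^t G(z)^t, where G(z) is the lower block-triangular matrix of translation blocks G_{li}(z) and Q(s,R) is the block-diagonal matrix with blocks s^n Q_n(R). -/

import Mathlib

open Matrix Finset
open scoped Pointwise

noncomputable section

/-- Block index set for the order-`K` CGPT block matrix: a pair of a degree
`l ∈ {1, …, K}` (encoded as `l : Fin K`, standing for the degree `l+1`) and an
order index in `Fin (2(l+1)+1)`.  Its cardinality is `K² + 2K`. -/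
def BIdx (K : ℕ) := Σ l : Fin K, Fin (2 * ((l : ℕ) + 1) + 1)

instance (K : ℕ) : Fintype (BIdx K) := by unfold BIdx; infer_instance

/-- The CGPT block matrix `M(D) = (M_{ln}(D))_{1 ≤ l,n ≤ K}`. -/
def blockM {K : ℕ}
    (M : Set (Fin 3 → ℝ) → (l n : ℕ) → Matrix (Fin (2 * l + 1)) (Fin (2 * n + 1)) ℂ)
    (D : Set (Fin 3 → ℝ)) : Matrix (BIdx K) (BIdx K) ℂ :=
  fun p q => M D ((p.1 : ℕ) + 1) ((q.1 : ℕ) + 1) p.2 q.2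

/-- The block lower-triangular matrix `G(z)` with `(l,i)`-block `G_{li}(z)`
for `i ≤ l` and `0` otherwise. -/
def blockG {K : ℕ}
    (G : (Fin 3 → ℝ) → (l i : ℕ) → Matrix (Fin (2 * l + 1)) (Fin (2 * i + 1)) ℂ)
    (z : Fin 3 → ℝ) : Matrix (BIdx K) (BIdx K) ℂ :=
  fun p q => if (q.1 : ℕ) ≤ (p.1 : ℕ) then G z ((p.1 : ℕ) + 1) ((q.1 : ℕ) + 1) p.2 q.2 else 0

/-- The block diagonal matrix `Q(s,R)` with `n`-th diagonal block `sⁿ Q_n(R)`. -/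
def blockQ {K : ℕ}
    (Q : (n : ℕ) → Matrix (Fin (2 * n + 1)) (Fin (2 * n + 1)) ℂ)
    (s : ℝ) : Matrix (BIdx K) (BIdx K) ℂ :=
  fun p q =>
    if h : (p.1 : ℕ) = (q.1 : ℕ) then
      (s : ℂ) ^ ((p.1 : ℕ) + 1) * Q ((p.1 : ℕ) + 1) p.2 (Fin.cast (by rw [h]) q.2)
    else 0


lemma univ_bidx {K : ℕ} :
    (Finset.univ : Finset (BIdx K))
      = (Finset.univ : Finset (Fin K)).sigma
          (fun l => (Finset.univ : Finset (Fin (2 * ((l : ℕ) + 1) + 1)))) := rfl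

lemma sum_bidx {K : ℕ} (f : BIdx K → ℂ) :
    ∑ a : BIdx K, f a = ∑ l : Fin K, ∑ j : Fin (2 * ((l : ℕ) + 1) + 1), f ⟨l, j⟩ := by
  rw [univ_bidx]; exact Finset.sum_sigma _ _ f

lemma icc_sum {K : ℕ} (p : Fin K) (f : ℕ → ℂ) :
    ∑ i ∈ Finset.Icc 1 ((p : ℕ) + 1), f i
      = ∑ l : Fin K, if (l : ℕ) ≤ (p : ℕ) then f ((l : ℕ) + 1) else 0 := by
  rw [Fin.sum_univ_eq_sum_range (fun m => if m ≤ (p : ℕ) then f (m + 1) else 0) K,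
    ← Finset.sum_filter]
  have h : (Finset.range K).filter (· ≤ (p : ℕ)) = Finset.range ((p : ℕ) + 1) := by
    ext m
    simp only [Finset.mem_filter, Finset.mem_range, Nat.lt_succ_iff]
    constructor
    · rintro ⟨_, h⟩; exact h
    · intro h; exact ⟨lt_of_le_of_lt h p.isLt, h⟩
  rw [h, ← Finset.Ico_add_one_right_eq_Icc, Finset.sum_Ico_eq_sum_range]
  simp [Nat.add_comm]

lemma map_apply_sig {K : ℕ} (A : Matrix (BIdx K) (BIdx K) ℂ) (f : ℂ → ℂ) (p : BIdx K)
    (l : Fin K) (j : Fin (2 * ((l : ℕ) + 1) + 1)) : A.map f p ⟨l, j⟩ = f (A p ⟨l, j⟩) := rfl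

lemma transpose_apply_sig {K : ℕ} (A : Matrix (BIdx K) (BIdx K) ℂ) (q : BIdx K)
    (l : Fin K) (j : Fin (2 * ((l : ℕ) + 1) + 1)) : Aᵀ ⟨l, j⟩ q = A q ⟨l, j⟩ := rfl

lemma blockM_scale_rot {K : ℕ}
    (M : Set (Fin 3 → ℝ) → (l n : ℕ) → Matrix (Fin (2 * l + 1)) (Fin (2 * n + 1)) ℂ)
    (R : Matrix (Fin 3) (Fin 3) ℝ)
    (Q : (n : ℕ) → Matrix (Fin (2 * n + 1)) (Fin (2 * n + 1)) ℂ)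
    (s : ℝ)
    (hscale : ∀ (D : Set (Fin 3 → ℝ)) (l n : ℕ), 1 ≤ l → 1 ≤ n →
      M (s • D) l n = (s : ℂ) ^ (l + n + 1) • M D l n)
    (hrot : ∀ (D : Set (Fin 3 → ℝ)) (l n : ℕ), 1 ≤ l → 1 ≤ n →
      M (R.mulVec '' D) l n = (Q l).map (starRingEnd ℂ) * M D l n * (Q n)ᵀ)
    (D : Set (Fin 3 → ℝ)) :
    blockM (K := K) M (s • (R.mulVec '' D)) =
      (s : ℂ) • ((blockQ (K := K) Q s).map (starRingEnd ℂ) * blockM (K := K) M D *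
        (blockQ (K := K) Q s)ᵀ) := by
  ext p q
  have hL : blockM (K := K) M (s • (R.mulVec '' D)) p q
      = (s : ℂ) ^ (((p.1 : ℕ) + 1) + ((q.1 : ℕ) + 1) + 1) *
        ∑ k, (∑ j, (starRingEnd ℂ) (Q ((p.1 : ℕ) + 1) p.2 j) *
          M D ((p.1 : ℕ) + 1) ((q.1 : ℕ) + 1) j k) * Q ((q.1 : ℕ) + 1) q.2 k := by
    show M (s • (R.mulVec '' D)) _ _ p.2 q.2 = _
    rw [hscale _ _ _ (by omega) (by omega), hrot _ _ _ (by omega) (by omega)]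
    simp [Matrix.mul_apply, Matrix.map_apply, Finset.sum_mul]
  rw [hL]
  have collapseA : ∀ b : BIdx K,
      (∑ a : BIdx K, ((blockQ (K := K) Q s).map (starRingEnd ℂ)) p a *
        blockM (K := K) M D a b)
      = ∑ j : Fin (2 * ((p.1 : ℕ) + 1) + 1),
          (starRingEnd ℂ) ((s : ℂ) ^ ((p.1 : ℕ) + 1) * Q ((p.1 : ℕ) + 1) p.2 j) *
            M D ((p.1 : ℕ) + 1) ((b.1 : ℕ) + 1) j b.2 := by
    intro b
    rw [sum_bidx]
    rw [Finset.sum_eq_single p.1]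
    · apply Finset.sum_congr rfl; intro j _
      simp [blockQ, blockM, Matrix.map_apply, map_apply_sig]
    · intro a1 _ hne
      apply Finset.sum_eq_zero; intro j _
      have h0 : ¬((p.1 : ℕ) = (a1 : ℕ)) := fun h => hne (Fin.ext h.symm)
      simp [blockQ, blockM, Matrix.map_apply, map_apply_sig, h0]
    · intro h; exact absurd (Finset.mem_univ _) h
  show _ = (s : ℂ) * (((blockQ (K := K) Q s).map (starRingEnd ℂ) * blockM (K := K) M D *
        (blockQ (K := K) Q s)ᵀ) p q)
  rw [Matrix.mul_apply]
  have collapseB :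
      (∑ b : BIdx K, (∑ a : BIdx K, ((blockQ (K := K) Q s).map (starRingEnd ℂ)) p a *
          blockM (K := K) M D a b) * (blockQ (K := K) Q s)ᵀ b q)
      = ∑ k : Fin (2 * ((q.1 : ℕ) + 1) + 1),
          (∑ j : Fin (2 * ((p.1 : ℕ) + 1) + 1),
            (starRingEnd ℂ) ((s : ℂ) ^ ((p.1 : ℕ) + 1) * Q ((p.1 : ℕ) + 1) p.2 j) *
              M D ((p.1 : ℕ) + 1) ((q.1 : ℕ) + 1) j k) *
            ((s : ℂ) ^ ((q.1 : ℕ) + 1) * Q ((q.1 : ℕ) + 1) q.2 k) := by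
    rw [sum_bidx]
    rw [Finset.sum_eq_single q.1]
    · apply Finset.sum_congr rfl; intro k _
      rw [collapseA ⟨q.1, k⟩]
      simp [blockQ, Matrix.transpose_apply, transpose_apply_sig]
    · intro b1 _ hne
      apply Finset.sum_eq_zero; intro k _
      have h0 : ¬((q.1 : ℕ) = (b1 : ℕ)) := fun h => hne (Fin.ext h.symm)
      simp [blockQ, Matrix.transpose_apply, transpose_apply_sig, h0]
    · intro h; exact absurd (Finset.mem_univ _) h
  simp only [Matrix.mul_apply]
  rw [collapseB]
  simp only [_root_.map_mul, _root_.map_pow, Complex.conj_ofReal]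
  simp only [Finset.mul_sum, Finset.sum_mul]
  refine Finset.sum_congr rfl fun k _ => Finset.sum_congr rfl fun j _ => ?_
  ring

lemma blockM_shift {K : ℕ}
    (M : Set (Fin 3 → ℝ) → (l n : ℕ) → Matrix (Fin (2 * l + 1)) (Fin (2 * n + 1)) ℂ)
    (G : (Fin 3 → ℝ) → (l i : ℕ) → Matrix (Fin (2 * l + 1)) (Fin (2 * i + 1)) ℂ)
    (z : Fin 3 → ℝ)
    (hshift : ∀ (D : Set (Fin 3 → ℝ)) (l n : ℕ), 1 ≤ l → 1 ≤ n →
      M ((fun x => z + x) '' D) l n =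
        ∑ i ∈ Finset.Icc 1 l, ∑ ν ∈ Finset.Icc 1 n,
          (G z l i).map (starRingEnd ℂ) * M D i ν * (G z n ν)ᵀ)
    (D : Set (Fin 3 → ℝ)) :
    blockM (K := K) M ((fun x => z + x) '' D) =
      (blockG (K := K) G z).map (starRingEnd ℂ) * blockM (K := K) M D *
        (blockG (K := K) G z)ᵀ := by
  ext p q
  have hL : blockM (K := K) M ((fun x => z + x) '' D) p q
      = ∑ i ∈ Finset.Icc 1 ((p.1 : ℕ) + 1), ∑ ν ∈ Finset.Icc 1 ((q.1 : ℕ) + 1),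
          ∑ k : Fin (2 * ν + 1),
            (∑ j : Fin (2 * i + 1),
              (starRingEnd ℂ) (G z ((p.1 : ℕ) + 1) i p.2 j) * M D i ν j k) *
              G z ((q.1 : ℕ) + 1) ν q.2 k := by
    show M ((fun x => z + x) '' D) _ _ p.2 q.2 = _
    rw [hshift _ _ _ (by omega) (by omega)]
    simp only [Matrix.sum_apply, Matrix.mul_apply, Matrix.map_apply, Matrix.transpose_apply]
  rw [hL]
  have cA : ∀ b : BIdx K,
      (∑ a : BIdx K, ((blockG (K := K) G z).map (starRingEnd ℂ)) p a *
          blockM (K := K) M D a b)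
      = ∑ i ∈ Finset.Icc 1 ((p.1 : ℕ) + 1), ∑ j : Fin (2 * i + 1),
          (starRingEnd ℂ) (G z ((p.1 : ℕ) + 1) i p.2 j) *
            M D i ((b.1 : ℕ) + 1) j b.2 := by
    intro b
    rw [sum_bidx, icc_sum p.1 (fun i => ∑ j : Fin (2 * i + 1),
      (starRingEnd ℂ) (G z ((p.1 : ℕ) + 1) i p.2 j) * M D i ((b.1 : ℕ) + 1) j b.2)]
    apply Finset.sum_congr rfl; intro a1 _
    by_cases h : (a1 : ℕ) ≤ (p.1 : ℕ)
    · rw [if_pos h]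
      apply Finset.sum_congr rfl; intro j _
      simp [blockG, blockM, Matrix.map_apply, map_apply_sig, h]
    · rw [if_neg h]
      apply Finset.sum_eq_zero; intro j _
      simp [blockG, blockM, Matrix.map_apply, map_apply_sig, h]
  have cB :
      (∑ b : BIdx K, (∑ a : BIdx K, ((blockG (K := K) G z).map (starRingEnd ℂ)) p a *
          blockM (K := K) M D a b) * (blockG (K := K) G z)ᵀ b q)
      = ∑ ν ∈ Finset.Icc 1 ((q.1 : ℕ) + 1), ∑ k : Fin (2 * ν + 1),
          (∑ i ∈ Finset.Icc 1 ((p.1 : ℕ) + 1), ∑ j : Fin (2 * i + 1),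
            (starRingEnd ℂ) (G z ((p.1 : ℕ) + 1) i p.2 j) * M D i ν j k) *
            G z ((q.1 : ℕ) + 1) ν q.2 k := by
    rw [sum_bidx, icc_sum q.1 (fun ν => ∑ k : Fin (2 * ν + 1),
      (∑ i ∈ Finset.Icc 1 ((p.1 : ℕ) + 1), ∑ j : Fin (2 * i + 1),
        (starRingEnd ℂ) (G z ((p.1 : ℕ) + 1) i p.2 j) * M D i ν j k) *
        G z ((q.1 : ℕ) + 1) ν q.2 k)]
    apply Finset.sum_congr rfl; intro b1 _
    by_cases h : (b1 : ℕ) ≤ (q.1 : ℕ)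
    · rw [if_pos h]
      apply Finset.sum_congr rfl; intro k _
      rw [cA ⟨b1, k⟩]
      simp [blockG, Matrix.transpose_apply, transpose_apply_sig, h]
    · rw [if_neg h]
      apply Finset.sum_eq_zero; intro k _
      have h0 : (blockG (K := K) G z)ᵀ ⟨b1, k⟩ q = 0 := by
        simp [blockG, Matrix.transpose_apply, transpose_apply_sig, h]
      rw [h0, mul_zero]
  simp only [Matrix.mul_apply]
  rw [cB]
  rw [Finset.sum_comm]
  apply Finset.sum_congr rfl; intro ν _
  rw [Finset.sum_comm]
  apply Finset.sum_congr rfl; intro k _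
  rw [Finset.sum_mul]

/-- For `D ↦ T_z T^s R(D)` (rotate by `R ∈ SO(3)`, scale by
`s > 0`, shift by `z`), the order-`K` CGPT block matrix satisfies
`M(T_z T^s R(D)) = s · conj(G(z)) conj(Q(s,R)) M(D) Q(s,R)ᵗ G(z)ᵗ`.
The hypotheses are the scaling, shift and rotation transformation rules for
the individual CGPT matrices `M_{ln}`, with `Q n = Q_n(R)` the Wigner matrices
of the rotation `R`. -/
theorem blockM_transform {K : ℕ}
    (M : Set (Fin 3 → ℝ) → (l n : ℕ) → Matrix (Fin (2 * l + 1)) (Fin (2 * n + 1)) ℂ)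
    (G : (Fin 3 → ℝ) → (l i : ℕ) → Matrix (Fin (2 * l + 1)) (Fin (2 * i + 1)) ℂ)
    (R : Matrix (Fin 3) (Fin 3) ℝ) (hR : R * Rᵀ = 1) (hdet : R.det = 1)
    (Q : (n : ℕ) → Matrix (Fin (2 * n + 1)) (Fin (2 * n + 1)) ℂ)
    (s : ℝ) (hs : 0 < s) (z : Fin 3 → ℝ)
    (hscale : ∀ (D : Set (Fin 3 → ℝ)) (l n : ℕ), 1 ≤ l → 1 ≤ n →
      M (s • D) l n = (s : ℂ) ^ (l + n + 1) • M D l n)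
    (hshift : ∀ (D : Set (Fin 3 → ℝ)) (l n : ℕ), 1 ≤ l → 1 ≤ n →
      M ((fun x => z + x) '' D) l n =
        ∑ i ∈ Finset.Icc 1 l, ∑ ν ∈ Finset.Icc 1 n,
          (G z l i).map (starRingEnd ℂ) * M D i ν * (G z n ν)ᵀ)
    (hrot : ∀ (D : Set (Fin 3 → ℝ)) (l n : ℕ), 1 ≤ l → 1 ≤ n →
      M (R.mulVec '' D) l n = (Q l).map (starRingEnd ℂ) * M D l n * (Q n)ᵀ)
    (D : Set (Fin 3 → ℝ)) :
    blockM (K := K) M ((fun x => z + x) '' (s • (R.mulVec '' D))) =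
      (s : ℂ) • ((blockG (K := K) G z).map (starRingEnd ℂ) *
        (blockQ (K := K) Q s).map (starRingEnd ℂ) * blockM (K := K) M D *
        (blockQ (K := K) Q s)ᵀ * (blockG (K := K) G z)ᵀ) := by
  rw [blockM_shift (K := K) M G z hshift (s • (R.mulVec '' D)),
    blockM_scale_rot (K := K) M R Q s hscale hrot D]
  simp only [Matrix.mul_smul, Matrix.smul_mul, Matrix.mul_assoc]
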